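/- Let $K$ be a real symmetric $p\times p$ matrix and $\mu>0$. If $\Theta'$ is any real symmetric positive definite $p\times p$ matrix satisfying $-\Theta'^{-1}+\mu\Theta' = K$, then $\Theta' = \dfrac{K+\sqrt{K^2+4\mu I}}{2\mu}$; i.e., the equation $-\Theta^{-1}+\mu\Theta=K$ has a unique symmetric positive definite solution. -/

import Mathlib

open scoped ComplexOrder in
/-- The square root of a positive semidefinite matrix, as `Matrix.PosSemidef.sqrt` was defined
in Mathlib (December 2024); it has since been removed from Mathlib. -/
noncomputable def Matrix.PosSemidef.sqrt {n 𝕜 : Type*} [Fintype n] [RCLike 𝕜] [DecidableEq n]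
    {A : Matrix n n 𝕜} (hA : A.PosSemidef) : Matrix n n 𝕜 :=
  hA.1.eigenvectorUnitary.1 * Matrix.diagonal ((↑) ∘ (√·) ∘ hA.1.eigenvalues) *
    (star hA.1.eigenvectorUnitary : Matrix n n 𝕜)

open scoped MatrixOrder in
theorem Matrix.PosSemidef.eq_sqrt_of_sq_eq' {n : Type*} [Fintype n] [DecidableEq n]
    {A B : Matrix n n ℝ} (hA : A.PosSemidef) (hB : B.PosSemidef) (h : A ^ 2 = B) :
    A = hB.sqrt := by
  have e : hB.sqrt = CFC.sqrt B := by
    rw [CFC.sqrt_eq_cfc, cfc_nnreal_eq_real _ B, hB.1.cfc_eq]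
    simp only [Matrix.IsHermitian.cfc, Matrix.PosSemidef.sqrt, Unitary.conjStarAlgAut_apply]
    congr 3
    funext i
    simp [hB.eigenvalues_nonneg i]
  rw [e, ← h, CFC.sqrt_sq A hA.nonneg]

/-- Uniqueness: any symmetric positive definite solution `Θ'` of the matrix
quadratic equation `-Θ'⁻¹ + μ Θ' = K` equals `(K + √(K ^ 2 + 4μ I)) / (2μ)`.
The hypothesis `hP` is automatically satisfied since `K` is symmetric and
`μ > 0`. -/
theorem theta_update_unique_posDef_solution (p : ℕ) (K : Matrix (Fin p) (Fin p) ℝ)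
    (hK : K.IsHermitian) (μ : ℝ) (hμ : 0 < μ)
    (hP : (K ^ 2 + (4 * μ) • (1 : Matrix (Fin p) (Fin p) ℝ)).PosSemidef)
    (Θ' : Matrix (Fin p) (Fin p) ℝ) (hΘ' : Θ'.PosDef)
    (heq : -Θ'⁻¹ + μ • Θ' = K) :
    Θ' = (2 * μ)⁻¹ • (K + hP.sqrt) := by
  have hdet : IsUnit Θ'.det := isUnit_iff_ne_zero.mpr (ne_of_gt hΘ'.det_pos)
  have h1 : Θ' * Θ'⁻¹ = 1 := Matrix.mul_nonsing_inv _ hdet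
  have h2 : Θ'⁻¹ * Θ' = 1 := Matrix.nonsing_inv_mul _ hdet
  set A : Matrix (Fin p) (Fin p) ℝ := μ • Θ' + Θ'⁻¹ with hA
  have hsmul : (μ • Θ').PosDef := by
    refine ⟨by rw [Matrix.IsHermitian, Matrix.conjTranspose_smul, star_trivial, hΘ'.1], fun x hx => ?_⟩
    exact (hΘ'.smul hμ).2 hx
  have hApsd : A.PosSemidef := (hsmul.add hΘ'.inv).posSemidef
  have hsq : A ^ 2 = K ^ 2 + (4 * μ) • (1 : Matrix (Fin p) (Fin p) ℝ) := by
    rw [← heq, hA]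
    simp only [pow_two, Matrix.add_mul, Matrix.mul_add, Matrix.neg_mul, Matrix.mul_neg,
      Matrix.smul_mul, Matrix.mul_smul, h1, h2, smul_smul, neg_neg]
    module
  have hAsqrt : A = hP.sqrt := hApsd.eq_sqrt_of_sq_eq' hP hsq
  have hKA : K + A = (2 * μ) • Θ' := by
    rw [hA, ← heq]; module
  rw [← hAsqrt, hKA, smul_smul, inv_mul_cancel₀ (by positivity), one_smul]
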